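/- Let z be a leaf of 𝒯 and let P be the root-to-z path; for each internal vertex v on P, let c_v be the color of the path edge leaving v and n_v ∈ N(v) the child of v on P. Define w := Σ_{v ∈ P ∩ V_in} ( |v^#⟩ + W_{c_v}^{−1/2}·(|v, c_v⟩ − |n_v⟩) ). Then Â w = |z₀⟩ − |z⟩; and if P has at most T edges of which at most G are red, then ‖w‖² ≤ T + 2T/W_b + 2G/W_r. -/

import Mathlib

noncomputable section

namespace TreeSpanProgram

variable {V : Type*} [Fintype V] [DecidableEq V]

/-- The children of a vertex `v` in the rooted tree encoded by `root` and `parent`. -/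
def children (root : V) (parent : V → V) (v : V) : Finset V :=
  Finset.univ.filter fun u => u ≠ root ∧ parent u = v

/-- Index of the orthonormal basis of `Ĥ`: a triple `|v, black⟩, |v, red⟩, |v^#⟩` (tags
`0, 1, 2`) for each internal vertex `v`, and a vector `|v⟩` for each vertex `v ∈ V`. -/
abbrev HIdx (VIn : Finset V) := ({v : V // v ∈ VIn} × Fin 3) ⊕ V

/-- The images under `Â` of the orthonormal basis vectors of `Ĥ`:
`Â|v, black⟩ = √W_b Σ_{u ∈ N(v)} |u⟩`, `Â|v, red⟩ = √W_r Σ_{u ∈ N(v)} |u⟩`,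
`Â|v^#⟩ = |v⟩ − Σ_{u ∈ N(v)} |u⟩`, `Â|z₀⟩ = 0` and `Â|v⟩ = √W_{c(v)} |v⟩` for `v ≠ z₀`. -/
def Acol (root : V) (parent : V → V) (color : V → Bool) (VIn : Finset V) (Wb Wr : ℝ) :
    HIdx VIn → EuclideanSpace ℂ V
  | Sum.inl (v, t) =>
      if t = 0 then
        ((Real.sqrt Wb : ℝ) : ℂ) • ∑ u ∈ children root parent v.1, EuclideanSpace.single u 1
      else if t = 1 then
        ((Real.sqrt Wr : ℝ) : ℂ) • ∑ u ∈ children root parent v.1, EuclideanSpace.single u 1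
      else
        EuclideanSpace.single v.1 1 - ∑ u ∈ children root parent v.1, EuclideanSpace.single u 1
  | Sum.inr v =>
      if v = root then 0
      else ((Real.sqrt (if color v then Wb else Wr) : ℝ) : ℂ) • EuclideanSpace.single v 1

/-- The linear map `Â : Ĥ → 𝒱`. -/
def Ahat (root : V) (parent : V → V) (color : V → Bool) (VIn : Finset V) (Wb Wr : ℝ) :
    EuclideanSpace ℂ (HIdx VIn) →ₗ[ℂ] EuclideanSpace ℂ V :=
  (PiLp.basisFun 2 ℂ (HIdx VIn)).constr ℂ (Acol root parent color VIn Wb Wr)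

/-- Positive witness for the span program built from a (generalized) decision tree: for a leaf
`z` with root-to-`z` path `P`, the vector
`w := Σ_{v ∈ P ∩ V_in} (|v^#⟩ + W_{c_v}^{−1/2}(|v, c_v⟩ − |n_v⟩))` — described here by its
coordinates, where `c_v` is the color of the path edge leaving `v` and `n_v` the child of `v`
on `P` — satisfies `Â w = |z₀⟩ − |z⟩`, and `‖w‖² ≤ T + 2T/W_b + 2G/W_r` if `P` has at most
`T` edges of which at most `G` are red. -/
theorem tree_positive_witness
    (root : V) (parent : V → V) (color : V → Bool) (depth : V → ℕ)
    (hproot : parent root = root)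
    (hdroot : depth root = 0)
    (hdparent : ∀ v, v ≠ root → depth (parent v) + 1 = depth v)
    (hblack : ∀ v, (∃ u, u ≠ root ∧ parent u = v) →
      ∃! u, u ≠ root ∧ parent u = v ∧ color u = true)
    (VIn : Finset V) (hVIn : ∀ v, v ∈ VIn ↔ ∃ u, u ≠ root ∧ parent u = v)
    (Wb Wr : ℝ) (hWb : 0 < Wb) (hWr : 0 < Wr)
    (z : V) (hz : z ∉ VIn)
    (P : Finset V) (hP : ∀ v, v ∈ P ↔ ∃ k : ℕ, parent^[k] z = v)
    (w : EuclideanSpace ℂ (HIdx VIn))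
    (hw1 : ∀ v : {v : V // v ∈ VIn},
      w (Sum.inl (v, 2)) = if v.1 ∈ P then 1 else 0)
    (hw2 : ∀ v : {v : V // v ∈ VIn},
      w (Sum.inl (v, 0)) =
        if ∃ u, u ≠ root ∧ parent u = v.1 ∧ u ∈ P ∧ color u = true then
          (((Real.sqrt Wb)⁻¹ : ℝ) : ℂ) else 0)
    (hw3 : ∀ v : {v : V // v ∈ VIn},
      w (Sum.inl (v, 1)) =
        if ∃ u, u ≠ root ∧ parent u = v.1 ∧ u ∈ P ∧ color u = false then
          (((Real.sqrt Wr)⁻¹ : ℝ) : ℂ) else 0)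
    (hw4 : ∀ u : V,
      w (Sum.inr u) =
        if u ≠ root ∧ u ∈ P then
          ((-(Real.sqrt (if color u then Wb else Wr))⁻¹ : ℝ) : ℂ) else 0) :
    Ahat root parent color VIn Wb Wr w =
      EuclideanSpace.single root 1 - EuclideanSpace.single z 1 ∧
    ∀ T G : ℝ, (depth z : ℝ) ≤ T →
      ((P.filter (fun v => v ≠ root ∧ color v = false)).card : ℝ) ≤ G →
      ‖w‖ ^ 2 ≤ T + 2 * T / Wb + 2 * G / Wr := by
  set d := depth z with hd
  have hd0 : ∀ v : V, depth v = 0 → v = root := by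
    intro v hv
    by_contra h
    have := hdparent v h
    omega
  have hiter : ∀ k, k ≤ d → depth (parent^[k] z) = d - k := by
    intro k hk
    induction k with
    | zero => simp [hd]
    | succ n ih =>
      have hn : n ≤ d := by omega
      have h1 := ih hn
      have hne : parent^[n] z ≠ root := by
        intro h
        rw [h, hdroot] at h1
        omega
      rw [Function.iterate_succ_apply']
      have := hdparent _ hne
      omega
  have hfroot : parent^[d] z = root := by
    apply hd0
    have := hiter d le_rfl
    omega
  have hfge : ∀ k, d ≤ k → parent^[k] z = root := by
    intro k hk
    have : parent^[k] z = parent^[k - d] (parent^[d] z) := by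
      rw [← Function.iterate_add_apply]
      congr 1
      omega
    rw [this, hfroot]
    exact Function.iterate_fixed hproot _
  have hmemP : ∀ v, v ∈ P ↔ ∃ k, k ≤ d ∧ parent^[k] z = v := by
    intro v
    rw [hP]
    constructor
    · rintro ⟨k, rfl⟩
      rcases le_or_gt k d with h | h
      · exact ⟨k, h, rfl⟩
      · exact ⟨d, le_rfl, by rw [hfroot, hfge k h.le]⟩
    · rintro ⟨k, _, rfl⟩; exact ⟨k, rfl⟩
  have hdepthP : ∀ v ∈ P, depth v ≤ d ∧ parent^[d - depth v] z = v := by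
    intro v hv
    rcases (hmemP v).1 hv with ⟨k, hk, rfl⟩
    have := hiter k hk
    constructor
    · omega
    · rw [this]
      congr 1
      omega
  have hzP : z ∈ P := (hP z).2 ⟨0, rfl⟩
  have hrootP : root ∈ P := (hmemP root).2 ⟨d, le_rfl, hfroot⟩
  have hparP : ∀ u ∈ P, parent u ∈ P := by
    intro u hu
    rcases (hP u).1 hu with ⟨k, rfl⟩
    exact (hP _).2 ⟨k + 1, by rw [Function.iterate_succ_apply']⟩
  have hchild_uniq : ∀ u₁ u₂, u₁ ∈ P → u₂ ∈ P → u₁ ≠ root → u₂ ≠ root →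
      parent u₁ = parent u₂ → u₁ = u₂ := by
    intro u₁ u₂ h1 h2 hr1 hr2 hpar
    have e1 := hdepthP u₁ h1
    have e2 := hdepthP u₂ h2
    have d1 := hdparent u₁ hr1
    have d2 := hdparent u₂ hr2
    rw [hpar] at d1
    have : depth u₁ = depth u₂ := by omega
    rw [← e1.2, ← e2.2, this]
  have hchild_ex : ∀ v ∈ P, v ≠ z → ∃ u, u ∈ P ∧ u ≠ root ∧ parent u = v := by
    intro v hv hvz
    obtain ⟨hle, heq⟩ := hdepthP v hv
    have hlt : depth v < d := by
      rcases lt_or_eq_of_le hle with h | h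
      · exact h
      · exfalso; apply hvz; rw [← heq, h]; simp
    refine ⟨parent^[d - depth v - 1] z, (hmemP _).2 ⟨_, by omega, rfl⟩, ?_, ?_⟩
    · intro h
      have := hiter (d - depth v - 1) (by omega)
      rw [h, hdroot] at this
      omega
    · have h2 := Function.iterate_succ_apply' parent (d - depth v - 1) z
      rw [show (d - depth v - 1).succ = d - depth v by omega] at h2
      rw [← h2, heq]
  have hcard : P.card = d + 1 := by
    have himg : P = (Finset.range (d + 1)).image (fun k => parent^[k] z) := by
      ext v
      rw [hmemP, Finset.mem_image]
      constructor
      · rintro ⟨k, hk, rfl⟩; exact ⟨k, Finset.mem_range.2 (by omega), rfl⟩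
      · rintro ⟨k, hk, rfl⟩
        have := Finset.mem_range.1 hk
        exact ⟨k, by omega, rfl⟩
    have hinj : Set.InjOn (fun k => parent^[k] z) (Finset.range (d + 1)) := by
      intro a ha b hb hab
      simp only [Finset.coe_range, Set.mem_Iio] at ha hb
      have h1 := hiter a (by omega)
      have h2 := hiter b (by omega)
      simp only at hab
      rw [hab] at h1
      omega
    rw [himg, Finset.card_image_of_injOn hinj, Finset.card_range]

  -- notation
  set Acl := Acol root parent color VIn Wb Wr with hAcl
  have hsqb : Real.sqrt Wb ≠ 0 := by positivity
  have hsqr : Real.sqrt Wr ≠ 0 := by positivity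
  have hA0 : ∀ v : {v : V // v ∈ VIn}, Acl (Sum.inl (v, 0)) =
      ((Real.sqrt Wb : ℝ) : ℂ) •
        ∑ u ∈ children root parent v.1, EuclideanSpace.single u (1 : ℂ) := by
    intro v; simp [hAcl, Acol]
  have hA1 : ∀ v : {v : V // v ∈ VIn}, Acl (Sum.inl (v, 1)) =
      ((Real.sqrt Wr : ℝ) : ℂ) •
        ∑ u ∈ children root parent v.1, EuclideanSpace.single u (1 : ℂ) := by
    intro v; simp [hAcl, Acol]
  have hA2 : ∀ v : {v : V // v ∈ VIn}, Acl (Sum.inl (v, 2)) =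
      EuclideanSpace.single v.1 (1 : ℂ) -
        ∑ u ∈ children root parent v.1, EuclideanSpace.single u (1 : ℂ) := by
    intro v; simp [hAcl, Acol]
  have hAr : ∀ u : V, Acl (Sum.inr u) = if u = root then 0 else
      ((Real.sqrt (if color u then Wb else Wr) : ℝ) : ℂ) •
        EuclideanSpace.single u (1 : ℂ) := by
    intro u; simp [hAcl, Acol]
  -- more path facts
  have hPVIn : VIn.filter (· ∈ P) = P.erase z := by
    ext v
    simp only [Finset.mem_filter, Finset.mem_erase]
    constructor
    · rintro ⟨hvin, hvp⟩
      refine ⟨fun h => hz (h ▸ hvin), hvp⟩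
    · rintro ⟨hvz, hvp⟩
      obtain ⟨u, hu1, hu2, hu3⟩ := hchild_ex v hvp hvz
      exact ⟨(hVIn v).2 ⟨u, hu2, hu3⟩, hvp⟩
  have hQ : P.filter (fun u => u ≠ root) = P.erase root := by
    ext u; simp [Finset.mem_erase, Finset.mem_filter, and_comm]
  have hcard_ez : (P.erase z).card = d := by
    rw [Finset.card_erase_of_mem hzP, hcard]
    omega
  have hcard_er : (P.erase root).card = d := by
    rw [Finset.card_erase_of_mem hrootP, hcard]
    omega
  -- the black/red edge counts
  set B := (P.filter (fun u => u ≠ root ∧ color u = true)).card with hB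
  set G0 := (P.filter (fun u => u ≠ root ∧ color u = false)).card with hG0
  have hBG : B + G0 = d := by
    have key := Finset.card_filter_add_card_filter_not
      (s := P.filter (fun u => u ≠ root)) (p := fun u => color u = true)
    rw [Finset.filter_filter, Finset.filter_filter, hQ, hcard_er] at key
    have hGG : P.filter (fun u => u ≠ root ∧ color u = false) =
        P.filter (fun a => a ≠ root ∧ ¬ color a = true) := by
      ext u; simp
    rw [hB, hG0, hGG]
    exact key
  -- cardinalities of the tag-0 and tag-1 support sets
  have hcardC0 : (VIn.filter
      (fun v => ∃ u, u ≠ root ∧ parent u = v ∧ u ∈ P ∧ color u = true)).card = B := by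
    rw [hB]
    symm
    apply Finset.card_bij (fun u _ => parent u)
    · intro u hu
      simp only [Finset.mem_filter] at hu ⊢
      obtain ⟨huP, hur, huc⟩ := hu
      exact ⟨(hVIn _).2 ⟨u, hur, rfl⟩, u, hur, rfl, huP, huc⟩
    · intro u1 h1 u2 h2 he
      simp only [Finset.mem_filter] at h1 h2
      exact hchild_uniq u1 u2 h1.1 h2.1 h1.2.1 h2.2.1 he
    · intro v hv
      simp only [Finset.mem_filter] at hv
      obtain ⟨hvin, u, hur, hup, huP, huc⟩ := hv
      exact ⟨u, Finset.mem_filter.2 ⟨huP, hur, huc⟩, hup⟩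
  have hcardC1 : (VIn.filter
      (fun v => ∃ u, u ≠ root ∧ parent u = v ∧ u ∈ P ∧ color u = false)).card = G0 := by
    rw [hG0]
    symm
    apply Finset.card_bij (fun u _ => parent u)
    · intro u hu
      simp only [Finset.mem_filter] at hu ⊢
      obtain ⟨huP, hur, huc⟩ := hu
      exact ⟨(hVIn _).2 ⟨u, hur, rfl⟩, u, hur, rfl, huP, huc⟩
    · intro u1 h1 u2 h2 he
      simp only [Finset.mem_filter] at h1 h2
      exact hchild_uniq u1 u2 h1.1 h2.1 h1.2.1 h2.2.1 he
    · intro v hv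
      simp only [Finset.mem_filter] at hv
      obtain ⟨hvin, u, hur, hup, huP, huc⟩ := hv
      exact ⟨u, Finset.mem_filter.2 ⟨huP, hur, huc⟩, hup⟩
  constructor
  · -- Part 1 : Â w = |root⟩ - |z⟩
    have hAw : Ahat root parent color VIn Wb Wr w = ∑ i, w i • Acl i := by
      simp [Ahat, Module.Basis.constr_apply_fintype, PiLp.basisFun_repr, hAcl]
    rw [hAw, Fintype.sum_sum_type, Fintype.sum_prod_type]
    have hinl : ∀ v : {v : V // v ∈ VIn},
        (∑ t : Fin 3, w (Sum.inl (v, t)) • Acl (Sum.inl (v, t))) =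
        if v.1 ∈ P then EuclideanSpace.single v.1 (1 : ℂ) else 0 := by
      intro v
      rw [Fin.sum_univ_three]
      by_cases hvP : v.1 ∈ P
      · have hvz : v.1 ≠ z := fun h => hz (h ▸ v.2)
        obtain ⟨u, huP, hur, hup⟩ := hchild_ex v.1 hvP hvz
        have h2 : w (Sum.inl (v, 2)) = 1 := by rw [hw1]; simp [hvP]
        by_cases hc : color u = true
        · have h0 : w (Sum.inl (v, 0)) = (((Real.sqrt Wb)⁻¹ : ℝ) : ℂ) := by
            rw [hw2]; exact if_pos ⟨u, hur, hup, huP, hc⟩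
          have h1 : w (Sum.inl (v, 1)) = 0 := by
            rw [hw3]
            apply if_neg
            rintro ⟨u', hur', hup', huP', hc'⟩
            rw [hchild_uniq u' u huP' huP hur' hur (hup'.trans hup.symm)] at hc'
            simp [hc] at hc'
          rw [h0, h1, h2, if_pos hvP, hA0, hA1, hA2]
          simp only [zero_smul, one_smul, smul_smul, zero_mul]
          rw [← Complex.ofReal_mul, inv_mul_cancel₀ hsqb, Complex.ofReal_one,
            one_smul]
          abel
        · have h1 : w (Sum.inl (v, 1)) = (((Real.sqrt Wr)⁻¹ : ℝ) : ℂ) := by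
            rw [hw3]
            exact if_pos ⟨u, hur, hup, huP, by simpa using hc⟩
          have h0 : w (Sum.inl (v, 0)) = 0 := by
            rw [hw2]
            apply if_neg
            rintro ⟨u', hur', hup', huP', hc'⟩
            rw [hchild_uniq u' u huP' huP hur' hur (hup'.trans hup.symm)] at hc'
            exact hc hc'
          rw [h0, h1, h2, if_pos hvP, hA0, hA1, hA2]
          simp only [zero_smul, one_smul, smul_smul, zero_mul]
          rw [← Complex.ofReal_mul, inv_mul_cancel₀ hsqr, Complex.ofReal_one,
            one_smul]
          abel
      · have h2 : w (Sum.inl (v, 2)) = 0 := by rw [hw1]; simp [hvP]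
        have h0 : w (Sum.inl (v, 0)) = 0 := by
          rw [hw2]
          apply if_neg
          rintro ⟨u', hur', hup', huP', _⟩
          exact hvP (hup' ▸ hparP u' huP')
        have h1 : w (Sum.inl (v, 1)) = 0 := by
          rw [hw3]
          apply if_neg
          rintro ⟨u', hur', hup', huP', _⟩
          exact hvP (hup' ▸ hparP u' huP')
        rw [h0, h1, h2, if_neg hvP]
        simp
    have hinr : ∀ u : V, w (Sum.inr u) • Acl (Sum.inr u) =
        if u ≠ root ∧ u ∈ P then -EuclideanSpace.single u (1 : ℂ) else 0 := by
      intro u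
      by_cases h : u ≠ root ∧ u ∈ P
      · rw [hw4, if_pos h, if_pos h, hAr, if_neg h.1, smul_smul,
          ← Complex.ofReal_mul, neg_mul]
        rcases Bool.eq_false_or_eq_true (color u) with hc | hc <;>
          rw [hc] <;> simp only [if_true, if_false, Bool.false_eq_true] <;>
          rw [inv_mul_cancel₀ (by positivity)] <;> push_cast <;>
          rw [neg_smul, one_smul]
      · rw [hw4, if_neg h, zero_smul, if_neg h]
    calc (∑ v : {v : V // v ∈ VIn}, ∑ t : Fin 3, w (Sum.inl (v, t)) • Acl (Sum.inl (v, t)))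
          + ∑ u : V, w (Sum.inr u) • Acl (Sum.inr u)
        = (∑ v : {v : V // v ∈ VIn},
            if v.1 ∈ P then EuclideanSpace.single v.1 (1 : ℂ) else 0)
          + ∑ u : V, if u ≠ root ∧ u ∈ P then -EuclideanSpace.single u (1 : ℂ) else 0 := by
          rw [Finset.sum_congr rfl (fun v _ => hinl v),
            Finset.sum_congr rfl (fun u _ => hinr u)]
      _ = (∑ v ∈ P.erase z, EuclideanSpace.single v (1 : ℂ))
          - ∑ u ∈ P.erase root, EuclideanSpace.single u (1 : ℂ) := by
          have e1 : (∑ v : {v : V // v ∈ VIn},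
              if v.1 ∈ P then EuclideanSpace.single v.1 (1 : ℂ) else 0) =
              ∑ v ∈ P.erase z, EuclideanSpace.single v (1 : ℂ) := by
            rw [Finset.sum_coe_sort VIn
              (fun v => if v ∈ P then EuclideanSpace.single v (1 : ℂ) else 0),
              Finset.sum_ite_mem,
              show VIn ∩ P = P.erase z from by
                rw [← hPVIn]; ext v; simp [Finset.mem_inter, Finset.mem_filter]]
          have e2 : (∑ u : V,
              if u ≠ root ∧ u ∈ P then -EuclideanSpace.single u (1 : ℂ) else 0) =
              -∑ u ∈ P.erase root, EuclideanSpace.single u (1 : ℂ) := by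
            rw [← Finset.sum_filter]
            rw [show Finset.univ.filter (fun u => u ≠ root ∧ u ∈ P) = P.erase root by
              ext u; simp [Finset.mem_erase]]
            rw [Finset.sum_neg_distrib]
          rw [e1, e2, ← sub_eq_add_neg]
      _ = EuclideanSpace.single root 1 - EuclideanSpace.single z 1 := by
          rw [Finset.sum_erase_eq_sub hzP, Finset.sum_erase_eq_sub hrootP]
          abel
  · -- Part 2 : the norm bound
    intro T G hT hG
    have hnorm : ‖w‖ ^ 2 = ∑ i, ‖w i‖ ^ 2 := by
      rw [EuclideanSpace.norm_eq, Real.sq_sqrt (by positivity)]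
    have s2 : ∀ v : {v : V // v ∈ VIn},
        ‖w (Sum.inl (v, 2))‖ ^ 2 = if v.1 ∈ P then (1 : ℝ) else 0 := by
      intro v; rw [hw1]; split <;> simp
    have s0 : ∀ v : {v : V // v ∈ VIn}, ‖w (Sum.inl (v, 0))‖ ^ 2 =
        if ∃ u, u ≠ root ∧ parent u = v.1 ∧ u ∈ P ∧ color u = true
        then Wb⁻¹ else 0 := by
      intro v; rw [hw2]; split
      · simp only [Complex.norm_real, Real.norm_eq_abs]
        rw [sq_abs, inv_pow, Real.sq_sqrt hWb.le]
      · simp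
    have s1 : ∀ v : {v : V // v ∈ VIn}, ‖w (Sum.inl (v, 1))‖ ^ 2 =
        if ∃ u, u ≠ root ∧ parent u = v.1 ∧ u ∈ P ∧ color u = false
        then Wr⁻¹ else 0 := by
      intro v; rw [hw3]; split
      · simp only [Complex.norm_real, Real.norm_eq_abs]
        rw [sq_abs, inv_pow, Real.sq_sqrt hWr.le]
      · simp
    have sr : ∀ u : V, ‖w (Sum.inr u)‖ ^ 2 =
        if u ≠ root ∧ u ∈ P then (if color u then Wb⁻¹ else Wr⁻¹) else 0 := by
      intro u; rw [hw4]; split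
      · have hpos : (0 : ℝ) ≤ (if color u then Wb else Wr) := by
          split
          · exact hWb.le
          · exact hWr.le
        simp only [Complex.norm_real, Real.norm_eq_abs]
        rw [abs_neg, sq_abs, inv_pow, Real.sq_sqrt hpos, apply_ite Inv.inv]
      · simp
    -- generic helper to sum an indicator over VIn
    have hsum0 : (∑ v : {v : V // v ∈ VIn},
        if ∃ u, u ≠ root ∧ parent u = v.1 ∧ u ∈ P ∧ color u = true
        then Wb⁻¹ else (0:ℝ)) = (B : ℝ) * Wb⁻¹ := by
      rw [Finset.sum_coe_sort VIn (fun v =>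
          if ∃ u, u ≠ root ∧ parent u = v ∧ u ∈ P ∧ color u = true
          then Wb⁻¹ else (0:ℝ)),
        ← Finset.sum_filter, Finset.sum_const, hcardC0, nsmul_eq_mul]
    have hsum1 : (∑ v : {v : V // v ∈ VIn},
        if ∃ u, u ≠ root ∧ parent u = v.1 ∧ u ∈ P ∧ color u = false
        then Wr⁻¹ else (0:ℝ)) = (G0 : ℝ) * Wr⁻¹ := by
      rw [Finset.sum_coe_sort VIn (fun v =>
          if ∃ u, u ≠ root ∧ parent u = v ∧ u ∈ P ∧ color u = false
          then Wr⁻¹ else (0:ℝ)),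
        ← Finset.sum_filter, Finset.sum_const, hcardC1, nsmul_eq_mul]
    have hsum2 : (∑ v : {v : V // v ∈ VIn},
        if v.1 ∈ P then (1:ℝ) else 0) = (d : ℝ) := by
      rw [Finset.sum_coe_sort VIn (fun v => if v ∈ P then (1:ℝ) else 0),
        ← Finset.sum_filter, Finset.sum_const, hPVIn, hcard_ez, nsmul_eq_mul,
        mul_one]
    have hsumr : (∑ u : V,
        if u ≠ root ∧ u ∈ P then (if color u then Wb⁻¹ else Wr⁻¹) else (0:ℝ)) =
        (B : ℝ) * Wb⁻¹ + (G0 : ℝ) * Wr⁻¹ := by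
      rw [← Finset.sum_filter,
        show Finset.univ.filter (fun u => u ≠ root ∧ u ∈ P) = P.erase root by
          ext u; simp [Finset.mem_erase],
        Finset.sum_ite, Finset.sum_const, Finset.sum_const]
      have e1 : (P.erase root).filter (fun u => color u = true) =
          P.filter (fun u => u ≠ root ∧ color u = true) := by
        ext u; simp only [Finset.mem_filter, Finset.mem_erase]; tauto
      have e2 : (P.erase root).filter (fun u => ¬ color u = true) =
          P.filter (fun u => u ≠ root ∧ color u = false) := by
        ext u
        simp only [Finset.mem_filter, Finset.mem_erase, Bool.not_eq_true]
        tauto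
      rw [e1, e2, ← hB, ← hG0, nsmul_eq_mul, nsmul_eq_mul]
    have hval : ‖w‖ ^ 2 = (d : ℝ) + ((B : ℝ) * Wb⁻¹ + (G0 : ℝ) * Wr⁻¹)
        + ((B : ℝ) * Wb⁻¹ + (G0 : ℝ) * Wr⁻¹) := by
      rw [hnorm, Fintype.sum_sum_type, Fintype.sum_prod_type]
      have : (∑ v : {v : V // v ∈ VIn}, ∑ t : Fin 3, ‖w (Sum.inl (v, t))‖ ^ 2)
          = (d : ℝ) + ((B : ℝ) * Wb⁻¹ + (G0 : ℝ) * Wr⁻¹) := by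
        have hthree : ∀ v : {v : V // v ∈ VIn},
            (∑ t : Fin 3, ‖w (Sum.inl (v, t))‖ ^ 2) =
            (if ∃ u, u ≠ root ∧ parent u = v.1 ∧ u ∈ P ∧ color u = true
              then Wb⁻¹ else (0:ℝ)) +
            (if ∃ u, u ≠ root ∧ parent u = v.1 ∧ u ∈ P ∧ color u = false
              then Wr⁻¹ else (0:ℝ)) +
            (if v.1 ∈ P then (1:ℝ) else 0) := by
          intro v
          rw [Fin.sum_univ_three, s0 v, s1 v, s2 v]
        rw [Finset.sum_congr rfl (fun v _ => hthree v),
          Finset.sum_add_distrib, Finset.sum_add_distrib,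
          hsum0, hsum1, hsum2]
        ring
      rw [this, Finset.sum_congr rfl (fun u _ => sr u), hsumr]
    have hdT : (d : ℝ) ≤ T := hT
    have hBd : (B : ℝ) ≤ (d : ℝ) := by exact_mod_cast Nat.le.intro hBG
    have hG0G : (G0 : ℝ) ≤ G := hG
    have hBT : (B : ℝ) ≤ T := hBd.trans hdT
    rw [hval]
    have e : (d : ℝ) + ((B : ℝ) * Wb⁻¹ + (G0 : ℝ) * Wr⁻¹)
        + ((B : ℝ) * Wb⁻¹ + (G0 : ℝ) * Wr⁻¹)
        = (d : ℝ) + 2 * B / Wb + 2 * G0 / Wr := by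
      field_simp
      ring
    rw [e]
    gcongr


end TreeSpanProgram

end
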